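/- arXiv:1410.3331 — 6 statements merged into one kernel-verified Lean document; each statement's English description precedes it below -/
import Mathlib

section
/- Let A be a densely defined, closed, accretive operator in a complex Hilbert space H. Then A is m-accretive if and only if its adjoint A* is accretive. -/
open scoped InnerProductSpace

/-- A densely defined, closed, accretive operator `A` in a complex
Hilbert space is m-accretive if and only if its adjoint `A*` is accretive. -/
theorem closed_accretive_m_accretive_iff_adjoint_accretive
    {H : Type*} [NormedAddCommGroup H] [InnerProductSpace ℂ H] [CompleteSpace H]
    (A : H →ₗ.[ℂ] H)
    (hdense : Dense (A.domain : Set H))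
    (hclosed : IsClosed (A.graph : Set (H × H)))
    (hacc : ∀ x : A.domain, 0 ≤ (⟪A x, (x : H)⟫_ℂ).re) :
    Set.range (fun x : A.domain => (x : H) + A x) = Set.univ ↔
      ∀ y : A.adjoint.domain, 0 ≤ (⟪A.adjoint y, (y : H)⟫_ℂ).re := by
  classical
  -- the map `x ↦ x + A x` as a linear map
  set Smap : A.domain →ₗ[ℂ] H := A.domain.subtype + A.toFun with hSmap
  have hS : ∀ x : A.domain, Smap x = (x : H) + A x := fun x => rfl
  -- basic norm estimate from accretivity
  have hest : ∀ x : A.domain, ‖(x : H)‖ ^ 2 + ‖A x‖ ^ 2 ≤ ‖Smap x‖ ^ 2 := by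
    intro x
    rw [hS, @norm_add_sq ℂ]
    have h1 : RCLike.re ⟪(x : H), A x⟫_ℂ = RCLike.re ⟪A x, (x : H)⟫_ℂ := inner_re_symm _ _
    have h2 := hacc x
    simp only [RCLike.re_to_complex] at *
    linarith
  have hestS : ∀ x : A.domain, ‖(x : H)‖ ≤ ‖Smap x‖ := by
    intro x
    have := hest x
    have h2 : ‖(x : H)‖ ^ 2 ≤ ‖Smap x‖ ^ 2 := by nlinarith [sq_nonneg ‖A x‖]
    exact (pow_le_pow_iff_left₀ (norm_nonneg _) (norm_nonneg _) two_ne_zero).mp h2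
  constructor
  · -- m-accretive → adjoint accretive
    intro hsurj y
    have hsurjS : Function.Surjective Smap := by
      intro w
      have : w ∈ Set.range (fun x : A.domain => (x : H) + A x) := by
        rw [hsurj]; trivial
      obtain ⟨x, hx⟩ := this
      exact ⟨x, hx⟩
    have hinjS : Function.Injective Smap := by
      rw [injective_iff_map_eq_zero]
      intro x hx
      have := hestS x
      rw [hx, norm_zero] at this
      have hx0 : (x : H) = 0 := norm_le_zero_iff.mp this
      exact Subtype.ext hx0
    set e : A.domain ≃ₗ[ℂ] H := LinearEquiv.ofBijective Smap ⟨hinjS, hsurjS⟩ with he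
    have heapp : ∀ x : A.domain, e x = Smap x := fun x => rfl
    set Tlin : H →ₗ[ℂ] H := A.domain.subtype ∘ₗ (e.symm : H →ₗ[ℂ] A.domain) with hTlin
    have hTapp : ∀ w : H, Tlin w = ((e.symm w : A.domain) : H) := fun w => rfl
    have hw_eq : ∀ w : H, w = Smap (e.symm w) := by
      intro w
      rw [← heapp]
      exact (e.apply_symm_apply w).symm
    have hTbound : ∀ w : H, ‖Tlin w‖ ≤ 1 * ‖w‖ := by
      intro w
      rw [one_mul, hTapp]
      calc ‖((e.symm w : A.domain) : H)‖ ≤ ‖Smap (e.symm w)‖ := hestS _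
        _ = ‖w‖ := by rw [← hw_eq]
    set Tc : H →L[ℂ] H := Tlin.mkContinuous 1 hTbound with hTc
    have hTcapp : ∀ w : H, Tc w = ((e.symm w : A.domain) : H) := fun w => rfl
    -- `‖2 T - 1‖ ≤ 1`
    set U : H →L[ℂ] H := (2 : ℂ) • Tc - 1 with hU
    have hUapp : ∀ w : H, U w = (2 : ℂ) • Tc w - w := by
      intro w; simp [hU]
    have hUnorm : ‖U‖ ≤ 1 := by
      apply ContinuousLinearMap.opNorm_le_bound _ zero_le_one
      intro w
      rw [one_mul, hUapp]
      set x : A.domain := e.symm w with hx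
      have hwx : w = (x : H) + A x := by rw [hw_eq w, hS]
      have h2 : (2 : ℂ) • Tc w - w = (x : H) - A x := by
        rw [hTcapp, ← hx, hwx, two_smul]; abel
      rw [h2]
      have hxx : ‖(x : H) - A x‖ ^ 2 ≤ ‖(x : H) + A x‖ ^ 2 := by
        rw [@norm_add_sq ℂ, @norm_sub_sq ℂ]
        have h1 : RCLike.re ⟪(x : H), A x⟫_ℂ = RCLike.re ⟪A x, (x : H)⟫_ℂ := inner_re_symm _ _
        have h2 := hacc x
        simp only [RCLike.re_to_complex] at *
        linarith
      rw [hwx]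
      exact (pow_le_pow_iff_left₀ (norm_nonneg _) (norm_nonneg _) two_ne_zero).mp hxx
    set Td : H →L[ℂ] H := ContinuousLinearMap.adjoint Tc with hTd
    have hUd : ContinuousLinearMap.adjoint U = (2 : ℂ) • Td - 1 := by
      ext w
      apply ext_inner_right ℂ
      intro z
      rw [ContinuousLinearMap.adjoint_inner_left, hUapp]
      simp only [ContinuousLinearMap.sub_apply, ContinuousLinearMap.smul_apply,
        ContinuousLinearMap.one_apply, inner_sub_left, inner_smul_left, inner_sub_right,
        inner_smul_right, hTd, ContinuousLinearMap.adjoint_inner_left]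
      rw [map_ofNat]
    have hUdnorm : ∀ w : H, ‖((2 : ℂ) • Td - 1) w‖ ≤ ‖w‖ := by
      intro w
      rw [← hUd]
      calc ‖ContinuousLinearMap.adjoint U w‖ ≤ ‖ContinuousLinearMap.adjoint U‖ * ‖w‖ :=
            (ContinuousLinearMap.adjoint U).le_opNorm w
        _ = ‖U‖ * ‖w‖ := by rw [ContinuousLinearMap.adjoint.norm_map]
        _ ≤ 1 * ‖w‖ := by gcongr
        _ = ‖w‖ := one_mul _
    have hkey : ∀ w : H, ‖Td w‖ ^ 2 ≤ (⟪Td w, w⟫_ℂ).re := by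
      intro w
      have h1 := hUdnorm w
      have h2 : ‖((2 : ℂ) • Td - 1) w‖ ^ 2 ≤ ‖w‖ ^ 2 :=
        pow_le_pow_left₀ (norm_nonneg _) h1 2
      have h3 : ((2 : ℂ) • Td - 1) w = (2 : ℂ) • Td w - w := by simp
      rw [h3, @norm_sub_sq ℂ] at h2
      have h4 : ‖(2 : ℂ) • Td w‖ = 2 * ‖Td w‖ := by
        rw [norm_smul]; norm_num
      have h5 : (⟪(2 : ℂ) • Td w, w⟫_ℂ).re = 2 * (⟪Td w, w⟫_ℂ).re := by
        rw [inner_smul_left]; simp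
      simp only [RCLike.re_to_complex] at *
      nlinarith [norm_nonneg (Td w), norm_nonneg w]
    -- now apply to `y`
    set w : H := (y : H) + A.adjoint y with hwdef
    have hTdw : Td w = y := by
      apply ext_inner_right ℂ
      intro z
      rw [hTd, ContinuousLinearMap.adjoint_inner_left]
      rw [hwdef, inner_add_left]
      have hform := (LinearPMap.adjoint_isFormalAdjoint hdense) y (e.symm z)
      rw [hTcapp, hform, ← inner_add_right]
      have : ((e.symm z : A.domain) : H) + A (e.symm z) = z := by
        rw [← hS, ← heapp, e.apply_symm_apply]
      rw [this]
    have := hkey w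
    rw [hTdw] at this
    have hAy : (A.adjoint y : H) = w - (y : H) := by rw [hwdef]; abel
    rw [hAy, inner_sub_left]
    have h6 : RCLike.re ⟪w, (y : H)⟫_ℂ = RCLike.re ⟪(y : H), w⟫_ℂ := inner_re_symm _ _
    have h7 : (⟪(y : H), (y : H)⟫_ℂ).re = ‖(y : H)‖ ^ 2 := by
      rw [← @inner_self_eq_norm_sq ℂ]; rfl
    simp only [Complex.sub_re]
    simp only [RCLike.re_to_complex] at *
    linarith
  · -- adjoint accretive → m-accretive
    intro hadj
    rw [Set.range_eq_univ]
    have hrange : Set.range (fun x : A.domain => (x : H) + A x) = (LinearMap.range Smap : Set H) := by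
      ext w
      simp only [Set.mem_range, SetLike.mem_coe, LinearMap.mem_range]
      exact ⟨fun ⟨x, hx⟩ => ⟨x, by rw [hS]; exact hx⟩, fun ⟨x, hx⟩ => ⟨x, by rw [← hS]; exact hx⟩⟩
    set K : Submodule ℂ H := LinearMap.range Smap with hK
    -- K is closed
    have hKclosed : IsClosed (K : Set H) := by
      have hgc : CompleteSpace A.graph := hclosed.completeSpace_coe
      set L : A.graph → H := fun p => (p : H × H).1 + (p : H × H).2 with hL
      have hrangeL : Set.range L = (K : Set H) := by
        ext u
        constructor
        · rintro ⟨⟨p, hp⟩, rfl⟩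
          rw [LinearPMap.mem_graph_iff] at hp
          obtain ⟨x, hx1, hx2⟩ := hp
          exact ⟨x, by rw [hS, hx1, hx2]⟩
        · rintro ⟨x, rfl⟩
          exact ⟨⟨((x : H), A x), A.mem_graph x⟩, rfl⟩
      have hmemest : ∀ p : A.graph, ‖(p : H × H)‖ ≤ ‖(p : H × H).1 + (p : H × H).2‖ := by
        rintro ⟨p, hp⟩
        rw [LinearPMap.mem_graph_iff] at hp
        obtain ⟨x, hx1, hx2⟩ := hp
        have h1 := hest x
        rw [hS] at h1
        have hn1 : ‖(x : H)‖ ≤ ‖(x : H) + A x‖ := by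
          nlinarith [norm_nonneg (A x), norm_nonneg ((x : H) + A x), norm_nonneg (x : H)]
        have hn2 : ‖A x‖ ≤ ‖(x : H) + A x‖ := by
          nlinarith [norm_nonneg (A x), norm_nonneg ((x : H) + A x), norm_nonneg (x : H)]
        simp only [Prod.norm_def]
        rw [← hx1, ← hx2]
        exact max_le hn1 hn2
      have hanti : AntilipschitzWith 1 L := by
        apply AntilipschitzWith.of_le_mul_dist
        intro p q
        rw [NNReal.coe_one, one_mul, dist_eq_norm, dist_eq_norm]
        have : L p - L q = ((p - q : A.graph) : H × H).1 + ((p - q : A.graph) : H × H).2 := by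
          simp [hL]; abel
        rw [this]
        have h2 : ‖p - q‖ = ‖((p - q : A.graph) : H × H)‖ := rfl
        rw [h2]
        exact hmemest (p - q)
      have hLip : LipschitzWith 2 L := by
        apply LipschitzWith.of_dist_le_mul
        intro p q
        rw [dist_eq_norm, dist_eq_norm]
        have : L p - L q = ((p - q : A.graph) : H × H).1 + ((p - q : A.graph) : H × H).2 := by
          simp [hL]; abel
        rw [this]
        have h2 : ‖p - q‖ = ‖((p - q : A.graph) : H × H)‖ := rfl
        rw [h2]
        calc ‖((p - q : A.graph) : H × H).1 + ((p - q : A.graph) : H × H).2‖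
            ≤ ‖((p - q : A.graph) : H × H).1‖ + ‖((p - q : A.graph) : H × H).2‖ := norm_add_le _ _
          _ ≤ ‖((p - q : A.graph) : H × H)‖ + ‖((p - q : A.graph) : H × H)‖ := by
              gcongr
              · exact le_max_left _ _
              · exact le_max_right _ _
          _ = 2 * ‖((p - q : A.graph) : H × H)‖ := by ring
      have := hanti.isClosed_range hLip.uniformContinuous
      rwa [hrangeL] at this
    have hmemK : ∀ u : H, u ∈ K ↔ ∃ x, Smap x = u := by
      intro u; rw [hK]; exact LinearMap.mem_range
    clear_value K
    haveI : CompleteSpace K := hKclosed.completeSpace_coe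
    -- the orthogonal complement of K is trivial
    have hKorth : Kᗮ = ⊥ := by
      rw [Submodule.eq_bot_iff]
      intro z hz
      rw [Submodule.mem_orthogonal] at hz
      have hz' : ∀ x : A.domain, ⟪(-z : H), (x : H)⟫_ℂ = ⟪z, A x⟫_ℂ := by
        intro x
        have h1 : ⟪(x : H) + A x, z⟫_ℂ = 0 := hz _ ((hmemK _).mpr ⟨x, hS x⟩)
        rw [inner_add_left] at h1
        have h2 : ⟪A x, z⟫_ℂ = ⟪(x : H), -z⟫_ℂ := by
          rw [inner_neg_right]; linear_combination h1
        calc ⟪(-z : H), (x : H)⟫_ℂ = starRingEnd ℂ ⟪(x : H), -z⟫_ℂ := (inner_conj_symm _ _).symm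
          _ = starRingEnd ℂ ⟪A x, z⟫_ℂ := by rw [h2]
          _ = ⟪z, A x⟫_ℂ := inner_conj_symm _ _
      have hzmem : z ∈ A.adjoint.domain :=
        LinearPMap.mem_adjoint_domain_of_exists z ⟨-z, hz'⟩
      have hzval : A.adjoint ⟨z, hzmem⟩ = -z :=
        LinearPMap.adjoint_apply_eq hdense ⟨z, hzmem⟩ hz'
      have h3 := hadj ⟨z, hzmem⟩
      rw [hzval] at h3
      have h4 : (⟪(-z : H), z⟫_ℂ).re = -‖z‖ ^ 2 := by
        rw [inner_neg_left]
        have : (⟪z, z⟫_ℂ).re = ‖z‖ ^ 2 := by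
          rw [← @inner_self_eq_norm_sq ℂ]; rfl
        simp only [Complex.neg_re]
        rw [this]
      rw [h4] at h3
      have h5 : ‖z‖ ^ 2 ≤ 0 := by linarith
      have h6 : ‖z‖ ^ 2 = 0 := le_antisymm h5 (sq_nonneg _)
      have h7 : ‖z‖ = 0 := sq_eq_zero_iff.mp h6
      exact norm_eq_zero.mp h7
    have hKtop : K = ⊤ := Submodule.orthogonal_eq_bot_iff.mp hKorth
    intro w
    obtain ⟨x, hx⟩ := (hmemK w).mp (hKtop ▸ Submodule.mem_top)
    exact ⟨x, by show (x : H) + A x = w; rw [← hS]; exact hx⟩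
end

section
/- Let a be a continuous accretive form on V and j ∈ L(V,H) with dense range. The following are equivalent: (i) there exists an operator A in H with D(A) = j(D_j(a)) and a(u,v) = ⟨A j(u), j(v)⟩_H for all u ∈ D_j(a), v ∈ V; (ii) D_j(a) ∩ ker j ⊆ ker T₀; (iii) D_j(a) ∩ ker j ⊆ ker T. Moreover, when these hold, j*(I+A)j(u) = Tu for all u ∈ D_j(a). -/
open scoped InnerProductSpace

variable {V H : Type*} [NormedAddCommGroup V] [InnerProductSpace ℂ V] [CompleteSpace V]
  [NormedAddCommGroup H] [InnerProductSpace ℂ H] [CompleteSpace H]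

/-- The space `D_j(a)` of a form `a : V × V → ℂ` with respect to `j`. -/
def Dj (a : V → V → ℂ) (j : V →L[ℂ] H) : Set V :=
  {u : V | ∃ f : H, ∀ v : V, a u v = ⟪j v, f⟫_ℂ}

/-- `A` is the operator associated with `(a, j)`:
`D(A) = j(D_j(a))` and `a(u,v) = ⟨A j(u), j(v)⟩_H` for `u ∈ D_j(a)`, `v ∈ V`. -/
def IsAssociatedOperator (a : V → V → ℂ) (j : V →L[ℂ] H) (A : H →ₗ.[ℂ] H) : Prop :=
  (A.domain : Set H) = j '' Dj a j ∧
    ∀ u ∈ Dj a j, ∀ hju : j u ∈ A.domain, ∀ v : V,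
      a u v = ⟪j v, A ⟨j u, hju⟩⟫_ℂ

/-- The pair `(a,j)` is associated with an operator `A` if and only if
`D_j(a) ∩ ker j ⊆ ker T₀`, if and only if `D_j(a) ∩ ker j ⊆ ker T`; moreover, in that
case `j*(I+A)j(u) = Tu` for all `u ∈ D_j(a)`. -/
theorem existence_of_associated_operator
    (j : V →L[ℂ] H) (hj : DenseRange j)
    (a : V → V → ℂ)
    (hcont : ∃ M : ℝ, ∀ u v : V, ‖a u v‖ ≤ M * ‖u‖ * ‖v‖)
    (hacc : ∀ u : V, 0 ≤ (a u u).re)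
    (T₀ : V →L[ℂ] V) (hT₀ : ∀ u v : V, a u v = ⟪v, T₀ u⟫_ℂ)
    (T : V →L[ℂ] V) (hT : T = T₀ + (ContinuousLinearMap.adjoint j).comp j) :
    ((∃ A : H →ₗ.[ℂ] H, IsAssociatedOperator a j A) ↔
        Dj a j ∩ {u : V | j u = 0} ⊆ {u : V | T₀ u = 0}) ∧
    ((∃ A : H →ₗ.[ℂ] H, IsAssociatedOperator a j A) ↔
        Dj a j ∩ {u : V | j u = 0} ⊆ {u : V | T u = 0}) ∧
    (∀ A : H →ₗ.[ℂ] H, IsAssociatedOperator a j A →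
      ∀ u ∈ Dj a j, ∀ hju : j u ∈ A.domain,
        ContinuousLinearMap.adjoint j (j u + A ⟨j u, hju⟩) = T u) := by
  classical
  -- from dense range: vectors orthogonal to the range are zero
  have hjdense : ∀ g : H, (∀ v : V, ⟪j v, g⟫_ℂ = 0) → g = 0 := by
    intro g hg
    have hcl : ∀ x ∈ closure (Set.range j), ⟪x, g⟫_ℂ = 0 := by
      have hclosed : IsClosed {x : H | ⟪x, g⟫_ℂ = 0} :=
        isClosed_eq (Continuous.inner continuous_id continuous_const) continuous_const
      intro x hx
      exact hclosed.closure_subset_iff.mpr (by rintro x ⟨v, rfl⟩; exact hg v) hx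
    have := hcl g (hj g)
    simpa [inner_self_eq_zero] using this
  -- T and T₀ agree on ker j
  have hTT₀ : ∀ u : V, j u = 0 → T u = T₀ u := by
    intro u hu
    simp [hT, ContinuousLinearMap.add_apply, ContinuousLinearMap.comp_apply, hu]
  -- uniqueness of the datum f of u ∈ Dj
  have hdata : ∀ (u : V) (f f' : H), (∀ v, a u v = ⟪j v, f⟫_ℂ) →
      (∀ v, a u v = ⟪j v, f'⟫_ℂ) → f = f' := by
    intro u f f' h1 h2
    have : f - f' = 0 := by
      apply hjdense
      intro v
      rw [inner_sub_right, ← h1 v, ← h2 v, sub_self]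
    exact sub_eq_zero.mp this
  -- Dj is a submodule
  have haddmem : ∀ {u u' : V}, u ∈ Dj a j → u' ∈ Dj a j → u + u' ∈ Dj a j := by
    rintro u u' ⟨f, hf⟩ ⟨f', hf'⟩
    refine ⟨f + f', fun v => ?_⟩
    have : a (u + u') v = a u v + a u' v := by
      rw [hT₀, hT₀, hT₀, map_add, inner_add_right]
    rw [this, hf v, hf' v, inner_add_right]
  have hsmulmem : ∀ (c : ℂ) {u : V}, u ∈ Dj a j → c • u ∈ Dj a j := by
    rintro c u ⟨f, hf⟩
    refine ⟨c • f, fun v => ?_⟩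
    have : a (c • u) v = c * a u v := by
      rw [hT₀, hT₀, map_smul, inner_smul_right]
    rw [this, hf v, inner_smul_right]
  have hnegmem : ∀ {u : V}, u ∈ Dj a j → -u ∈ Dj a j := by
    intro u hu
    simpa using hsmulmem (-1) hu
  -- (i) → (ii)
  have h12 : (∃ A : H →ₗ.[ℂ] H, IsAssociatedOperator a j A) →
      Dj a j ∩ {u : V | j u = 0} ⊆ {u : V | T₀ u = 0} := by
    rintro ⟨A, hdom, hAval⟩ u ⟨hu, hker⟩
    have hju : j u ∈ A.domain := by
      rw [← SetLike.mem_coe, hdom]; exact ⟨u, hu, rfl⟩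
    have hz : (⟨j u, hju⟩ : A.domain) = 0 := by
      ext; exact hker
    have : ∀ v : V, a u v = 0 := by
      intro v
      rw [hAval u hu hju v, hz, A.map_zero, inner_zero_right]
    have h0 : ∀ v : V, ⟪v, T₀ u⟫_ℂ = 0 := fun v => by rw [← hT₀]; exact this v
    have := h0 (T₀ u)
    simpa [inner_self_eq_zero] using this
  -- (ii) → (i) : construct A
  have h21 : (Dj a j ∩ {u : V | j u = 0} ⊆ {u : V | T₀ u = 0}) →
      ∃ A : H →ₗ.[ℂ] H, IsAssociatedOperator a j A := by
    intro hwd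
    -- value function
    set F : V → H := fun u => if h : u ∈ Dj a j then Classical.choose h else 0 with hF
    have hFspec : ∀ u (hu : u ∈ Dj a j), ∀ v, a u v = ⟪j v, F u⟫_ℂ := by
      intro u hu v
      simp only [hF, dif_pos hu]
      exact Classical.choose_spec hu v
    -- key well-definedness
    have huniq : ∀ u u', u ∈ Dj a j → u' ∈ Dj a j → j u = j u' → F u = F u' := by
      intro u u' hu hu' hjj
      have hmem : u + -u' ∈ Dj a j := haddmem hu (hnegmem hu')
      have hker : j (u + -u') = 0 := by simp [hjj]
      have hT0 : T₀ (u + -u') = 0 := hwd ⟨hmem, hker⟩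
      apply hdata u' (F u) (F u')
      · intro v
        have : a u' v = a u v := by
          rw [hT₀, hT₀]
          have : T₀ u - T₀ u' = 0 := by simpa [map_add, map_neg, sub_eq_add_neg] using hT0
          rw [sub_eq_zero.mp this]
        rw [this]; exact hFspec u hu v
      · exact hFspec u' hu'
    -- also: if j u = j u' with both in Dj, then a u v = a u' v
    have haeq : ∀ u u', u ∈ Dj a j → u' ∈ Dj a j → j u = j u' → ∀ v, a u v = a u' v := by
      intro u u' hu hu' hjj v
      have hmem : u + -u' ∈ Dj a j := haddmem hu (hnegmem hu')
      have hker : j (u + -u') = 0 := by simp [hjj]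
      have hT0 : T₀ (u + -u') = 0 := hwd ⟨hmem, hker⟩
      rw [hT₀, hT₀]
      have : T₀ u - T₀ u' = 0 := by simpa [map_add, map_neg, sub_eq_add_neg] using hT0
      rw [sub_eq_zero.mp this]
    -- the submodule Dsub
    let Dsub : Submodule ℂ V :=
      { carrier := Dj a j
        add_mem' := fun h h' => haddmem h h'
        zero_mem' := ⟨0, fun v => by rw [hT₀]; simp⟩
        smul_mem' := fun c u h => hsmulmem c h }
    let dom : Submodule ℂ H := Dsub.map (j : V →ₗ[ℂ] H)
    -- choice of preimage
    have hpick : ∀ x : dom, ∃ u, u ∈ Dj a j ∧ j u = (x : H) := by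
      rintro ⟨x, hx⟩
      rcases hx with ⟨u, hu, hju⟩
      exact ⟨u, hu, hju⟩
    let pick : dom → V := fun x => (hpick x).choose
    have hpick1 : ∀ x : dom, pick x ∈ Dj a j := fun x => (hpick x).choose_spec.1
    have hpick2 : ∀ x : dom, j (pick x) = (x : H) := fun x => (hpick x).choose_spec.2
    -- value lemma
    have hval : ∀ (x : dom) (u : V), u ∈ Dj a j → j u = (x : H) → F (pick x) = F u := by
      intro x u hu hju
      exact huniq _ _ (hpick1 x) hu (by rw [hpick2 x, hju])
    -- the linear map
    let Af : dom →ₗ[ℂ] H :=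
      { toFun := fun x => F (pick x)
        map_add' := by
          intro x y
          have h1 : pick x + pick y ∈ Dj a j := haddmem (hpick1 x) (hpick1 y)
          have h2 : j (pick x + pick y) = ((x + y : dom) : H) := by
            simp [map_add, hpick2 x, hpick2 y]
          show F (pick (x + y)) = F (pick x) + F (pick y)
          rw [hval (x + y) _ h1 h2]
          -- F (pick x + pick y) = F (pick x) + F (pick y)
          apply hdata (pick x + pick y)
          · exact hFspec _ h1
          · intro v
            have : a (pick x + pick y) v = a (pick x) v + a (pick y) v := by
              rw [hT₀, hT₀, hT₀, map_add, inner_add_right]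
            rw [this, hFspec _ (hpick1 x) v, hFspec _ (hpick1 y) v, inner_add_right]
        map_smul' := by
          intro c x
          have h1 : c • pick x ∈ Dj a j := hsmulmem c (hpick1 x)
          have h2 : j (c • pick x) = ((c • x : dom) : H) := by
            simp [map_smul, hpick2 x]
          show F (pick (c • x)) = c • F (pick x)
          rw [hval (c • x) _ h1 h2]
          apply hdata (c • pick x)
          · exact hFspec _ h1
          · intro v
            have : a (c • pick x) v = c * a (pick x) v := by
              rw [hT₀, hT₀, map_smul, inner_smul_right]
            rw [this, hFspec _ (hpick1 x) v, inner_smul_right] }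
    refine ⟨⟨dom, Af⟩, ?_, ?_⟩
    · ext x
      simp only [LinearPMap.mk_apply]
      constructor
      · rintro ⟨u, hu, rfl⟩
        exact ⟨u, hu, rfl⟩
      · rintro ⟨u, hu, rfl⟩
        exact ⟨u, hu, rfl⟩
    · intro u hu hju v
      show a u v = ⟪j v, F (pick ⟨j u, hju⟩)⟫_ℂ
      rw [hval ⟨j u, hju⟩ u hu rfl]
      exact hFspec u hu v
  -- (ii) ↔ (iii)
  have h23 : (Dj a j ∩ {u : V | j u = 0} ⊆ {u : V | T₀ u = 0}) ↔
      (Dj a j ∩ {u : V | j u = 0} ⊆ {u : V | T u = 0}) := by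
    constructor
    · intro h u hu
      have := h hu
      simp only [Set.mem_setOf_eq] at *
      rw [hTT₀ u hu.2]; exact this
    · intro h u hu
      have := h hu
      simp only [Set.mem_setOf_eq] at *
      rw [← hTT₀ u hu.2]; exact this
  refine ⟨⟨h12, h21⟩, ⟨fun h => h23.mp (h12 h), fun h => h21 (h23.mpr h)⟩, ?_⟩
  -- moreover part
  rintro A ⟨hdom, hAval⟩ u hu hju
  have hkey : ContinuousLinearMap.adjoint j (A ⟨j u, hju⟩) = T₀ u := by
    apply ext_inner_left ℂ
    intro v
    rw [ContinuousLinearMap.adjoint_inner_right, ← hAval u hu hju v, hT₀]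
  rw [map_add, hkey, hT]
  simp [ContinuousLinearMap.add_apply, add_comm]
end

section
/- Let a be a continuous accretive form and j ∈ L(V,H) with dense range. If j(D_j(a)) is dense in H, then D_j(a) ∩ ker j ⊆ ker T₀; in particular (a,j) is associated with an accretive operator. -/
open scoped InnerProductSpace

variable {V H : Type*} [NormedAddCommGroup V] [InnerProductSpace ℂ V] [CompleteSpace V]
  [NormedAddCommGroup H] [InnerProductSpace ℂ H] [CompleteSpace H]

theorem aux_ker (j : V →L[ℂ] H) (a : V → V → ℂ)
    (hacc : ∀ u : V, 0 ≤ (a u u).re)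
    (T₀ : V →L[ℂ] V) (hT₀ : ∀ u v : V, a u v = ⟪v, T₀ u⟫_ℂ)
    (hdense : Dense (j '' Dj a j))
    (u : V) (f : H) (hf : ∀ v, a u v = ⟪j v, f⟫_ℂ) (hju : j u = 0) :
    T₀ u = 0 := by
  -- Step A: a u w = 0 for all w ∈ Dj a j
  have hA : ∀ w ∈ Dj a j, a u w = 0 := by
    rintro w ⟨fw, hfw⟩
    have h1 : ⟪u, T₀ w⟫_ℂ = 0 := by rw [← hT₀, hfw, hju, inner_zero_left]
    have h2 : ⟪u, T₀ u⟫_ℂ = 0 := by rw [← hT₀, hf, hju, inner_zero_left]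
    have hexp : ∀ c : ℂ, a (w + c • u) (w + c • u) = a w w + c * a u w := by
      intro c
      rw [hT₀, map_add, map_smul]
      simp only [inner_add_left, inner_add_right, inner_smul_left, inner_smul_right,
        h1, h2, mul_zero, add_zero]
      rw [← hT₀, ← hT₀]
    have hpos : ∀ c : ℂ, 0 ≤ (a w w).re + (c * a u w).re := by
      intro c
      have h := hacc (w + c • u)
      rw [hexp c, Complex.add_re] at h
      exact h
    by_contra hne
    set z := a u w with hz
    have hn0 : 0 < ‖z‖ := norm_pos_iff.mpr hne
    have hz0 : 0 < ‖z‖ ^ 2 := by positivity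
    have hzz : (starRingEnd ℂ) z * z = ((‖z‖ ^ 2 : ℝ) : ℂ) := by
      rw [mul_comm, Complex.mul_conj]
      norm_cast
      simp [Complex.normSq_eq_norm_sq]
    have key : ∀ t : ℝ, 0 ≤ (a w w).re - t * ‖z‖ ^ 2 := by
      intro t
      have h := hpos (-(t : ℂ) * (starRingEnd ℂ) z)
      rw [mul_assoc, hzz,
        show (-(t : ℂ)) * ((‖z‖ ^ 2 : ℝ) : ℂ) = ((-(t * ‖z‖ ^ 2) : ℝ) : ℂ) by push_cast; ring,
        Complex.ofReal_re] at h
      linarith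
    have h := key (((a w w).re + 1) / ‖z‖ ^ 2)
    rw [div_mul_cancel₀ _ (ne_of_gt hz0)] at h
    linarith
  -- Step B: f = 0
  have hB : f = 0 := by
    have heq : Set.EqOn (fun x : H => ⟪x, f⟫_ℂ) (fun _ => (0 : ℂ)) (j '' Dj a j) := by
      rintro x ⟨w, hw, rfl⟩
      simpa [← hf w] using hA w hw
    have hcontf : Continuous fun x : H => ⟪x, f⟫_ℂ := continuous_id.inner continuous_const
    have := Continuous.ext_on hdense hcontf continuous_const heq
    have hff : ⟪f, f⟫_ℂ = 0 := congrFun this f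
    exact inner_self_eq_zero.mp hff
  -- Step C
  have : ⟪T₀ u, T₀ u⟫_ℂ = 0 := by rw [← hT₀, hf, hB, inner_zero_right]
  exact inner_self_eq_zero.mp this

theorem aux_uniq (j : V →L[ℂ] H) (hj : DenseRange j) (a : V → V → ℂ)
    (hacc : ∀ u : V, 0 ≤ (a u u).re)
    (T₀ : V →L[ℂ] V) (hT₀ : ∀ u v : V, a u v = ⟪v, T₀ u⟫_ℂ)
    (hdense : Dense (j '' Dj a j))
    (u u' : V) (f f' : H) (hf : ∀ v, a u v = ⟪j v, f⟫_ℂ) (hf' : ∀ v, a u' v = ⟪j v, f'⟫_ℂ)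
    (h : j u = j u') : f = f' := by
  have hw : ∀ v, a (u - u') v = ⟪j v, f - f'⟫_ℂ := by
    intro v
    rw [hT₀, map_sub, inner_sub_right, ← hT₀, ← hT₀, hf, hf', inner_sub_right]
  have hker : T₀ (u - u') = 0 :=
    aux_ker j a hacc T₀ hT₀ hdense (u - u') (f - f') hw (by rw [map_sub, h, sub_self])
  have hzero : ∀ v, ⟪j v, f - f'⟫_ℂ = 0 := by
    intro v
    rw [← hw, hT₀, hker, inner_zero_right]
  have heq : Set.EqOn (fun x : H => ⟪x, f - f'⟫_ℂ) (fun _ => (0 : ℂ)) (Set.range j) := by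
    rintro x ⟨v, rfl⟩; exact hzero v
  have := Continuous.ext_on hj (continuous_id.inner continuous_const) continuous_const heq
  have hff : ⟪f - f', f - f'⟫_ℂ = 0 := congrFun this (f - f')
  exact sub_eq_zero.mp (inner_self_eq_zero.mp hff)

/-- If `j(D_j(a))` is dense in `H`, then
`D_j(a) ∩ ker j ⊆ ker T₀`; in particular `(a,j)` is associated with an accretive
operator. -/
theorem associated_of_dense_image
    (j : V →L[ℂ] H) (hj : DenseRange j)
    (a : V → V → ℂ)
    (hcont : ∃ M : ℝ, ∀ u v : V, ‖a u v‖ ≤ M * ‖u‖ * ‖v‖)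
    (hacc : ∀ u : V, 0 ≤ (a u u).re)
    (T₀ : V →L[ℂ] V) (hT₀ : ∀ u v : V, a u v = ⟪v, T₀ u⟫_ℂ)
    (hdense : Dense (j '' Dj a j)) :
    Dj a j ∩ {u : V | j u = 0} ⊆ {u : V | T₀ u = 0} ∧
      ∃ A : H →ₗ.[ℂ] H, (∀ x : A.domain, 0 ≤ (⟪A x, (x : H)⟫_ℂ).re) ∧
        IsAssociatedOperator a j A := by
  classical
  have uniq : ∀ (u u' : V) (f f' : H), (∀ v, a u v = ⟪j v, f⟫_ℂ) →
      (∀ v, a u' v = ⟪j v, f'⟫_ℂ) → j u = j u' → f = f' :=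
    fun u u' f f' hf hf' h => aux_uniq j hj a hacc T₀ hT₀ hdense u u' f f' hf hf' h
  constructor
  · rintro u ⟨⟨f, hf⟩, hju⟩
    exact aux_ker j a hacc T₀ hT₀ hdense u f hf hju
  -- witness function
  set F : V → H := fun u => if h : u ∈ Dj a j then h.choose else 0 with hF
  have hFspec : ∀ u, u ∈ Dj a j → ∀ v, a u v = ⟪j v, F u⟫_ℂ := by
    intro u hu v
    simp only [hF, dif_pos hu]
    exact hu.choose_spec v
  -- the domain submodule
  set D : Submodule ℂ V :=
    { carrier := Dj a j
      add_mem' := by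
        rintro x y ⟨f, hf⟩ ⟨g, hg⟩
        exact ⟨f + g, fun v => by
          rw [hT₀, map_add, inner_add_right, ← hT₀, ← hT₀, hf, hg, inner_add_right]⟩
      zero_mem' := ⟨0, fun v => by rw [hT₀, map_zero, inner_zero_right, inner_zero_right]⟩
      smul_mem' := by
        rintro c x ⟨f, hf⟩
        exact ⟨c • f, fun v => by
          rw [hT₀, map_smul, inner_smul_right, ← hT₀, hf, inner_smul_right]⟩ } with hD
  have hmem : ∀ x : D.map (j : V →ₗ[ℂ] H), ∃ u, u ∈ Dj a j ∧ j u = (x : H) := by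
    rintro ⟨x, hx⟩
    obtain ⟨y, hy, hyx⟩ := hx
    exact ⟨y, hy, hyx⟩
  set g : D.map (j : V →ₗ[ℂ] H) → V := fun x => (hmem x).choose with hgdef
  have hg : ∀ x, g x ∈ Dj a j ∧ j (g x) = (x : H) := fun x => (hmem x).choose_spec
  set Af : D.map (j : V →ₗ[ℂ] H) →ₗ[ℂ] H :=
    { toFun := fun x => F (g x)
      map_add' := by
        intro x y
        have h1 := hg x; have h2 := hg y; have h3 := hg (x + y)
        have hsum : g x + g y ∈ Dj a j := D.add_mem h1.1 h2.1
        refine uniq (g (x + y)) (g x + g y) _ _ (hFspec _ h3.1) ?_ ?_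
        · intro v
          rw [hT₀, map_add, inner_add_right, ← hT₀, ← hT₀,
            hFspec _ h1.1, hFspec _ h2.1, inner_add_right]
        · rw [map_add, h1.2, h2.2, h3.2, Submodule.coe_add]
      map_smul' := by
        intro c x
        have h1 := hg x; have h3 := hg (c • x)
        have hsm : c • g x ∈ Dj a j := D.smul_mem c h1.1
        simp only [RingHom.id_apply]
        refine uniq (g (c • x)) (c • g x) _ _ (hFspec _ h3.1) ?_ ?_
        · intro v
          rw [hT₀, map_smul, inner_smul_right, ← hT₀, hFspec _ h1.1, inner_smul_right]
        · rw [map_smul, h1.2, h3.2, Submodule.coe_smul] } with hAf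
  refine ⟨⟨D.map (j : V →ₗ[ℂ] H), Af⟩, ?_, ?_, ?_⟩
  · intro x
    have h1 := hg x
    have hx : (⟪Af x, (x : H)⟫_ℂ).re = (a (g x) (g x)).re := by
      rw [show Af x = F (g x) from rfl, ← h1.2, ← inner_conj_symm, ← hFspec _ h1.1,
        Complex.conj_re]
    rw [show (⟨D.map (j : V →ₗ[ℂ] H), Af⟩ : H →ₗ.[ℂ] H) x = Af x from rfl, hx]
    exact hacc (g x)
  · simp only [Submodule.map_coe, ContinuousLinearMap.coe_coe]
    rfl
  · intro u hu hju v
    have hx := hg ⟨j u, hju⟩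
    have heq : F (g ⟨j u, hju⟩) = F u :=
      uniq _ _ _ _ (hFspec _ hx.1) (hFspec _ hu) hx.2
    rw [show ((⟨D.map (j : V →ₗ[ℂ] H), Af⟩ : H →ₗ.[ℂ] H) ⟨j u, hju⟩) = F (g ⟨j u, hju⟩) from rfl,
      heq]
    exact hFspec u hu v
end

section
/- Let A ≥ I be an unbounded self-adjoint operator in a complex Hilbert space H and let f ∈ H with f ∉ D(A^{1/2}). Equip V = D(A^{1/2}) with inner product ⟨x,y⟩_V = ⟨A^{1/2}x, A^{1/2}y⟩_H. Then the set {x ∈ D(A) : ⟨Ax, f⟩_H = 0} is dense in V. -/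
open scoped InnerProductSpace

open Filter Topology

private lemma pmap_apply_congr {H : Type*} [NormedAddCommGroup H] [InnerProductSpace ℂ H]
    {T S : H →ₗ.[ℂ] H} (h : T = S) (x : H) (hx : x ∈ T.domain) (hx' : x ∈ S.domain) :
    T ⟨x, hx⟩ = S ⟨x, hx'⟩ := by subst h; rfl

private lemma aux_le_of_sq_le_sq {a b : ℝ} (ha : 0 ≤ a) (hb : 0 ≤ b) (h : a ^ 2 ≤ b ^ 2) :
    a ≤ b := by nlinarith

/-- Let `A ≥ I` be an unbounded self-adjoint operator in a complex
Hilbert space `H`, with (self-adjoint) square root `B = A^{1/2}`, and let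
`f ∈ H \ D(A^{1/2})`.  Then `{x ∈ D(A) : ⟨Ax, f⟩ = 0}` is dense in
`V = D(A^{1/2})` for the inner product `⟨x,y⟩_V = ⟨A^{1/2}x, A^{1/2}y⟩_H`. -/
theorem dense_in_form_domain_of_orthogonality
    {H : Type*} [NormedAddCommGroup H] [InnerProductSpace ℂ H] [CompleteSpace H]
    (A : H →ₗ.[ℂ] H)
    (hAdense : Dense (A.domain : Set H))
    (hAsa : A.adjoint = A)
    (hAunbounded : A.domain ≠ ⊤)
    (hAgeI : ∀ x : A.domain, ‖(x : H)‖ ^ 2 ≤ (⟪(x : H), A x⟫_ℂ).re)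
    -- `B` is the self-adjoint square root `A^{1/2}` of `A`
    (B : H →ₗ.[ℂ] H)
    (hBdense : Dense (B.domain : Set H))
    (hBsa : B.adjoint = B)
    (hBsq₁ : ∀ (x : H) (hx : x ∈ A.domain), ∃ hx₁ : x ∈ B.domain,
      ∃ hx₂ : B ⟨x, hx₁⟩ ∈ B.domain, B ⟨B ⟨x, hx₁⟩, hx₂⟩ = A ⟨x, hx⟩)
    (hBsq₂ : ∀ (x : H) (hx₁ : x ∈ B.domain), B ⟨x, hx₁⟩ ∈ B.domain → x ∈ A.domain)
    (f : H) (hf : f ∉ B.domain) :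
    -- density of `{x ∈ D(A) : ⟨Ax, f⟩ = 0}` in `V = D(B)` with norm `x ↦ ‖Bx‖`
    ∀ y : B.domain, ∀ ε : ℝ, 0 < ε →
      ∃ (x : H) (hxA : x ∈ A.domain) (hxB : x ∈ B.domain),
        ⟪A ⟨x, hxA⟩, f⟫_ℂ = 0 ∧ ‖B ⟨x, hxB⟩ - B y‖ < ε := by
  -- symmetry of `A` and `B`
  have hsymA : ∀ u v : A.domain, ⟪(A u : H), (v : H)⟫_ℂ = ⟪(u : H), (A v : H)⟫_ℂ := by
    have h := LinearPMap.adjoint_isFormalAdjoint hAdense (T := A)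
    rw [hAsa] at h
    exact h
  have hsymB : ∀ u v : B.domain, ⟪(B u : H), (v : H)⟫_ℂ = ⟪(u : H), (B v : H)⟫_ℂ := by
    have h := LinearPMap.adjoint_isFormalAdjoint hBdense (T := B)
    rw [hBsa] at h
    exact h
  -- `‖x‖ ≤ ‖A x‖` on `D(A)`
  have hbdA : ∀ x : A.domain, ‖(x : H)‖ ≤ ‖(A x : H)‖ := by
    intro x
    have h1 := hAgeI x
    have h2 : (⟪(x : H), (A x : H)⟫_ℂ).re ≤ ‖(x : H)‖ * ‖(A x : H)‖ := by
      calc (⟪(x : H), (A x : H)⟫_ℂ).re ≤ ‖⟪(x : H), (A x : H)⟫_ℂ‖ :=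
            Complex.re_le_norm _
        _ ≤ ‖(x : H)‖ * ‖(A x : H)‖ := norm_inner_le_norm _ _
    nlinarith [norm_nonneg (x : H), norm_nonneg (A x : H)]
  -- `‖x‖ ≤ ‖B x‖` on `D(A)`
  have hbdB : ∀ (x : A.domain) (hxB : (x : H) ∈ B.domain),
      ‖(x : H)‖ ≤ ‖(B ⟨(x : H), hxB⟩ : H)‖ := by
    intro x hxB
    obtain ⟨hx₁, hx₂, heq⟩ := hBsq₁ x x.2
    have h3 := hsymB ⟨(x : H), hx₁⟩ ⟨(B ⟨(x : H), hx₁⟩ : H), hx₂⟩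
    rw [heq] at h3
    have h3' : ⟪(B ⟨(x : H), hx₁⟩ : H), (B ⟨(x : H), hx₁⟩ : H)⟫_ℂ
        = ⟪(x : H), (A x : H)⟫_ℂ := h3
    have h4 := hAgeI x
    rw [← h3'] at h4
    have h5 : (⟪(B ⟨(x : H), hx₁⟩ : H), (B ⟨(x : H), hx₁⟩ : H)⟫_ℂ).re
        = ‖(B ⟨(x : H), hx₁⟩ : H)‖ ^ 2 := by
      simpa using inner_self_eq_norm_sq (𝕜 := ℂ) (B ⟨(x : H), hx₁⟩ : H)
    rw [h5] at h4
    exact aux_le_of_sq_le_sq (norm_nonneg _) (norm_nonneg _) h4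
  -- surjectivity of `A`
  have hAsurj : ∀ h : H, ∃ x : A.domain, (A x : H) = h := by
    set R : Submodule ℂ H := LinearMap.range A.toFun with hR
    have hdR : Dense (R : Set H) := by
      rw [Submodule.dense_iff_topologicalClosure_eq_top,
        Submodule.topologicalClosure_eq_top_iff, Submodule.eq_bot_iff]
      intro g hg
      rw [Submodule.mem_orthogonal] at hg
      have hg0 : ∀ x : A.domain, ⟪(A x : H), g⟫_ℂ = 0 := fun x =>
        hg _ (LinearMap.mem_range_self _ x)
      have hrepg : ∀ x : A.domain, ⟪(0 : H), (x : H)⟫_ℂ = ⟪g, (A x : H)⟫_ℂ := by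
        intro x
        rw [inner_zero_left, ← inner_conj_symm, hg0 x, map_zero]
      have hgadj : g ∈ A.adjoint.domain :=
        LinearPMap.mem_adjoint_domain_of_exists _ ⟨0, hrepg⟩
      have happ : A.adjoint ⟨g, hgadj⟩ = 0 :=
        LinearPMap.adjoint_apply_eq hAdense _ hrepg
      have hgA : g ∈ A.domain := hAsa ▸ hgadj
      have happ' : A ⟨g, hgA⟩ = 0 := by
        rw [← pmap_apply_congr hAsa g hgadj hgA]; exact happ
      have h1 := hAgeI ⟨g, hgA⟩
      rw [happ'] at h1
      simp only [inner_zero_right, Complex.zero_re] at h1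
      have : ‖g‖ = 0 := by nlinarith [norm_nonneg g]
      exact norm_eq_zero.mp this
    intro h
    have hmem : h ∈ closure (R : Set H) := hdR h
    rw [mem_closure_iff_seq_limit] at hmem
    obtain ⟨u, humem, hulim⟩ := hmem
    have hex : ∀ n, ∃ v : A.domain, (A v : H) = u n := by
      intro n
      obtain ⟨v, hv⟩ := LinearMap.mem_range.mp (humem n)
      exact ⟨v, hv⟩
    choose x hx using hex
    have hucauchy : CauchySeq u := hulim.cauchySeq
    have hxcauchy : CauchySeq fun n => ((x n : H)) := by
      rw [Metric.cauchySeq_iff] at hucauchy ⊢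
      intro δ hδ
      obtain ⟨N, hN⟩ := hucauchy δ hδ
      refine ⟨N, fun m hm n hn => lt_of_le_of_lt ?_ (hN m hm n hn)⟩
      rw [dist_eq_norm, dist_eq_norm]
      have h2 := hbdA (x m - x n)
      have h1 : ((x m - x n : A.domain) : H) = (x m : H) - (x n : H) := rfl
      rw [h1, A.map_sub, hx m, hx n] at h2
      exact h2
    obtain ⟨p, hp⟩ := cauchySeq_tendsto_of_complete hxcauchy
    have hkey : ∀ v : A.domain, ⟪h, (v : H)⟫_ℂ = ⟪p, (A v : H)⟫_ℂ := by
      intro v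
      have t1 : Tendsto (fun n => ⟪((x n : H)), (A v : H)⟫_ℂ) atTop
          (𝓝 ⟪p, (A v : H)⟫_ℂ) := hp.inner tendsto_const_nhds
      have t2 : Tendsto (fun n => ⟪u n, (v : H)⟫_ℂ) atTop (𝓝 ⟪h, (v : H)⟫_ℂ) :=
        hulim.inner tendsto_const_nhds
      have heqfun : (fun n => ⟪((x n : H)), (A v : H)⟫_ℂ)
          = fun n => ⟪u n, (v : H)⟫_ℂ := by
        funext n
        rw [← hsymA (x n) v, hx n]
      rw [heqfun] at t1
      exact tendsto_nhds_unique t2 t1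
    have hpadj : p ∈ A.adjoint.domain :=
      LinearPMap.mem_adjoint_domain_of_exists _ ⟨h, hkey⟩
    have happ : A.adjoint ⟨p, hpadj⟩ = h :=
      LinearPMap.adjoint_apply_eq hAdense _ hkey
    have hpA : p ∈ A.domain := hAsa ▸ hpadj
    exact ⟨⟨p, hpA⟩, by rw [← pmap_apply_congr hAsa p hpadj hpA]; exact happ⟩
  -- every element of `D(B)` has the form `B x` with `x ∈ D(A)`
  have hrep : ∀ z : B.domain, ∃ (x : A.domain) (hxB : (x : H) ∈ B.domain),
      (B ⟨(x : H), hxB⟩ : H) = (z : H) := by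
    intro z
    obtain ⟨x, hxA⟩ := hAsurj (B z)
    obtain ⟨hx₁, hx₂, heq⟩ := hBsq₁ x x.2
    set w : H := (B ⟨(x : H), hx₁⟩ : H) - (z : H) with hwdef
    have hwB : w ∈ B.domain := sub_mem hx₂ z.2
    have hBw : B ⟨w, hwB⟩ = 0 := by
      have hsub : (⟨w, hwB⟩ : B.domain)
          = ⟨(B ⟨(x : H), hx₁⟩ : H), hx₂⟩ - ⟨(z : H), z.2⟩ := rfl
      rw [hsub, B.map_sub, heq]
      have : A ⟨(x : H), x.2⟩ = A x := rfl
      rw [this, hxA]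
      have : B ⟨(z : H), z.2⟩ = B z := rfl
      rw [this, sub_self]
    have hwB0 : B ⟨w, hwB⟩ ∈ B.domain := by rw [hBw]; exact zero_mem _
    have hwA : w ∈ A.domain := hBsq₂ w hwB hwB0
    have hAw : A ⟨w, hwA⟩ = 0 := by
      obtain ⟨h1, h2, heq2⟩ := hBsq₁ w hwA
      rw [← heq2]
      have e1 : B ⟨w, h1⟩ = 0 := hBw
      have h0 : (⟨(B ⟨w, h1⟩ : H), h2⟩ : B.domain) = (0 : B.domain) :=
        Subtype.ext (by simpa using e1)
      rw [h0, B.map_zero]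
    have hw0 : w = 0 := by
      have h1 := hAgeI ⟨w, hwA⟩
      rw [hAw] at h1
      simp only [inner_zero_right, Complex.zero_re] at h1
      have : ‖w‖ = 0 := by nlinarith [norm_nonneg w]
      exact norm_eq_zero.mp this
    refine ⟨x, hx₁, ?_⟩
    have := sub_eq_zero.mp (hwdef ▸ hw0)
    exact this
  -- `{B x : x ∈ D(A)}` approximates any element of `H`
  have happrox : ∀ (c : H) (δ : ℝ), 0 < δ →
      ∃ (x : A.domain) (hxB : (x : H) ∈ B.domain),
        ‖(B ⟨(x : H), hxB⟩ : H) - c‖ < δ := by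
    intro c δ hδ
    obtain ⟨z, hz1, hz2⟩ := Metric.dense_iff.mp hBdense c δ hδ
    obtain ⟨x, hxB, hBx⟩ := hrep ⟨z, hz2⟩
    refine ⟨x, hxB, ?_⟩
    rw [hBx]
    rw [Metric.mem_ball, dist_eq_norm] at hz1
    exact hz1
  -- unboundedness of `x ↦ ⟪A x, f⟫` w.r.t. `‖B x‖`
  have hunb : ∀ C : ℝ, ∃ (x : A.domain) (hxB : (x : H) ∈ B.domain),
      C * ‖(B ⟨(x : H), hxB⟩ : H)‖ < ‖⟪(A x : H), f⟫_ℂ‖ := by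
    by_contra hcon
    push_neg at hcon
    obtain ⟨C, hC⟩ := hcon
    apply hf
    have hfadj : f ∈ B.adjoint.domain := by
      rw [LinearPMap.mem_adjoint_domain_iff]
      apply AddMonoidHomClass.continuous_of_bound ((innerₛₗ ℂ f).comp B.toFun) C
      intro z
      obtain ⟨x, hxB, hBx⟩ := hrep z
      obtain ⟨hx₁, hx₂, heq⟩ := hBsq₁ x x.2
      have hz : z = (⟨(B ⟨(x : H), hx₁⟩ : H), hx₂⟩ : B.domain) :=
        Subtype.ext (by rw [← hBx])
      have hval : ((innerₛₗ ℂ f).comp B.toFun) z = ⟪f, (A x : H)⟫_ℂ := by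
        rw [hz]
        show ⟪f, (B ⟨(B ⟨(x : H), hx₁⟩ : H), hx₂⟩ : H)⟫_ℂ = _
        rw [heq]
      rw [hval]
      have h1 : ‖⟪f, (A x : H)⟫_ℂ‖ = ‖⟪(A x : H), f⟫_ℂ‖ := by
        rw [← inner_conj_symm]
        exact RCLike.norm_conj _
      rw [h1]
      have h3 : ‖z‖ = ‖(B ⟨(x : H), hxB⟩ : H)‖ := by
        rw [Submodule.coe_norm, ← hBx]
      rw [h3]
      exact hC x hxB
    rw [hBsa] at hfadj
    exact hfadj
  -- main construction
  intro y ε hε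
  obtain ⟨x₀, hx₀B, hx₀close⟩ := happrox (B y) (ε / 2) (by linarith)
  by_cases ha : ⟪(A x₀ : H), f⟫_ℂ = 0
  · refine ⟨(x₀ : H), x₀.2, hx₀B, ?_, ?_⟩
    · exact ha
    · calc ‖(B ⟨(x₀ : H), hx₀B⟩ : H) - B y‖ < ε / 2 := hx₀close
        _ < ε := by linarith
  · set a : ℂ := ⟪(A x₀ : H), f⟫_ℂ with hadef
    have hapos : 0 < ‖a‖ := norm_pos_iff.mpr ha
    set C : ℝ := 2 * ‖a‖ / ε with hCdef
    have hCpos : 0 < C := by positivity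
    obtain ⟨w, hwB, hw⟩ := hunb C
    set b : ℂ := ⟪(A w : H), f⟫_ℂ with hbdef
    have hb : b ≠ 0 := by
      intro h0
      rw [h0, norm_zero] at hw
      nlinarith [norm_nonneg (B ⟨(w : H), hwB⟩ : H)]
    have hbpos : 0 < ‖b‖ := norm_pos_iff.mpr hb
    set s : ℂ := a / b with hsdef
    set xv : H := (x₀ : H) - (starRingEnd ℂ s) • (w : H) with hxvdef
    have hxA : xv ∈ A.domain := sub_mem x₀.2 (Submodule.smul_mem _ _ w.2)
    have hxB : xv ∈ B.domain := sub_mem hx₀B (Submodule.smul_mem _ _ hwB)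
    have hsubA : (⟨xv, hxA⟩ : A.domain) = x₀ - (starRingEnd ℂ s) • w := rfl
    have hAx : (A ⟨xv, hxA⟩ : H) = (A x₀ : H) - (starRingEnd ℂ s) • (A w : H) := by
      rw [hsubA, A.map_sub, A.map_smul]
    have hip : ⟪(A ⟨xv, hxA⟩ : H), f⟫_ℂ = 0 := by
      rw [hAx, inner_sub_left, inner_smul_left, Complex.conj_conj]
      show a - a / b * b = 0
      rw [div_mul_cancel₀ _ hb, sub_self]
    have hBsub : (⟨xv, hxB⟩ : B.domain)
        = ⟨(x₀ : H), hx₀B⟩ - (starRingEnd ℂ s) • ⟨(w : H), hwB⟩ := rfl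
    have hBx : (B ⟨xv, hxB⟩ : H)
        = (B ⟨(x₀ : H), hx₀B⟩ : H) - (starRingEnd ℂ s) • (B ⟨(w : H), hwB⟩ : H) := by
      rw [hBsub, B.map_sub, B.map_smul]
    refine ⟨xv, hxA, hxB, hip, ?_⟩
    rw [hBx]
    have est : ‖(starRingEnd ℂ s) • (B ⟨(w : H), hwB⟩ : H)‖ < ε / 2 := by
      rw [norm_smul, RCLike.norm_conj, hsdef, norm_div,
        div_mul_eq_mul_div, div_lt_iff₀ hbpos]
      have h2 := mul_lt_mul_of_pos_left hw (show (0:ℝ) < ε / 2 by linarith)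
      calc ‖a‖ * ‖(B ⟨(w : H), hwB⟩ : H)‖
          = ε / 2 * (C * ‖(B ⟨(w : H), hwB⟩ : H)‖) := by
            rw [hCdef]; field_simp
        _ < ε / 2 * ‖b‖ := h2
    calc ‖(B ⟨(x₀ : H), hx₀B⟩ : H) - (starRingEnd ℂ s) • (B ⟨(w : H), hwB⟩ : H) - B y‖
        = ‖((B ⟨(x₀ : H), hx₀B⟩ : H) - B y) - (starRingEnd ℂ s) • (B ⟨(w : H), hwB⟩ : H)‖ := by
          rw [sub_right_comm]
      _ ≤ ‖(B ⟨(x₀ : H), hx₀B⟩ : H) - B y‖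
          + ‖(starRingEnd ℂ s) • (B ⟨(w : H), hwB⟩ : H)‖ := norm_sub_le _ _
      _ < ε / 2 + ε / 2 := by exact add_lt_add hx₀close est
      _ = ε := by ring
end

section
/- Let H be a complex Hilbert space and A an accretive operator in H that is maximal accretive and can be generated by an accretive form (equivalently, rg(I+A) is an operator range in H). Then A is m-accretive. More precisely: if A is maximal accretive and rg(I+A) is an operator range in H (i.e., the range of some bounded operator on H), then rg(I+A) = H. -/
open scoped InnerProductSpace

set_option linter.unusedSectionVars false
set_option maxHeartbeats 1000000

section AuxAccretive

variable {H : Type*} [NormedAddCommGroup H] [InnerProductSpace ℂ H] [CompleteSpace H]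

private lemma aux_norm_le (A : H →ₗ.[ℂ] H)
    (hacc : ∀ x : A.domain, 0 ≤ (⟪A x, (x : H)⟫_ℂ).re) (x : A.domain) :
    ‖(x : H)‖ ≤ ‖(x : H) + A x‖ := by
  have hre : ∀ z : ℂ, z.re = RCLike.re z := fun _ => rfl
  have h1 : ‖(x : H)‖ ^ 2 ≤ (⟪(x : H) + A x, (x : H)⟫_ℂ).re := by
    have hx : (⟪(x : H), (x : H)⟫_ℂ).re = ‖(x : H)‖ ^ 2 := by
      rw [hre]; exact inner_self_eq_norm_sq _
    rw [inner_add_left, Complex.add_re, hx]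
    have := hacc x
    linarith
  have h2 : (⟪(x : H) + A x, (x : H)⟫_ℂ).re ≤ ‖(x : H) + A x‖ * ‖(x : H)‖ := by
    rw [hre]; exact re_inner_le_norm _ _
  rcases eq_or_lt_of_le (norm_nonneg (x : H)) with h0 | h0
  · rw [← h0]; exact norm_nonneg _
  · have : ‖(x : H)‖ * ‖(x : H)‖ ≤ ‖(x : H) + A x‖ * ‖(x : H)‖ := by nlinarith
    exact le_of_mul_le_mul_right this h0

/-- Extending a maximal accretive operator by one point in an accretive way is impossible. -/
private lemma aux_ext (A : H →ₗ.[ℂ] H)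
    (hmax : ∀ B : H →ₗ.[ℂ] H, (∀ x : B.domain, 0 ≤ (⟪B x, (x : H)⟫_ℂ).re) →
      A ≤ B → A = B)
    (x₀ y' : H) (hx₀ : x₀ ∉ A.domain)
    (h : ∀ (x : A.domain) (c : ℂ), 0 ≤ (⟪A x + c • y', (x : H) + c • x₀⟫_ℂ).re) :
    False := by
  set B := A.supSpanSingleton x₀ y' hx₀ with hB
  have hBacc : ∀ z : B.domain, 0 ≤ (⟪B z, (z : H)⟫_ℂ).re := by
    rintro ⟨z, hz⟩
    have hz' : z ∈ A.domain ⊔ ℂ ∙ x₀ := hz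
    obtain ⟨a, ha, b, hb, rfl⟩ := Submodule.mem_sup.1 hz'
    obtain ⟨c, rfl⟩ := Submodule.mem_span_singleton.1 hb
    have happ := A.supSpanSingleton_apply_mk x₀ y' hx₀ a ha c
    have : B ⟨a + c • x₀, hz⟩ = A ⟨a, ha⟩ + c • y' := by
      exact happ
    rw [this]
    exact h ⟨a, ha⟩ c
  have hle : A ≤ B := A.left_le_sup _ _
  have heq := hmax B hBacc hle
  have hx₀' : x₀ ∈ B.domain :=
    Submodule.mem_sup_right (Submodule.mem_span_singleton_self x₀)
  rw [← heq] at hx₀'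
  exact hx₀ hx₀'

/-- The (closure of the) inverse of `I + A` as an everywhere-defined contraction. -/
private lemma aux_T (A : H →ₗ.[ℂ] H)
    (hacc : ∀ x : A.domain, 0 ≤ (⟪A x, (x : H)⟫_ℂ).re)
    (hdense : Dense (Set.range (fun x : A.domain => (x : H) + A x))) :
    ∃ T : H →L[ℂ] H,
      (∀ x : A.domain, T ((x : H) + A x) = x) ∧
      (∀ w : H, ‖T w‖ ^ 2 ≤ (⟪w, T w⟫_ℂ).re) := by
  set g : A.domain →ₗ[ℂ] H := A.domain.subtype + A.toFun with hgdef
  have hgx : ∀ x : A.domain, g x = (x : H) + A x := fun x => rfl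
  have hnorm : ∀ x : A.domain, ‖(x : H)‖ ≤ ‖g x‖ := by
    intro x; rw [hgx]; exact aux_norm_le A hacc x
  have hginj : Function.Injective g := by
    intro a b hab
    have h0 : g (a - b) = 0 := by rw [map_sub, hab, sub_self]
    have := hnorm (a - b)
    rw [h0, norm_zero] at this
    have : ((a - b : A.domain) : H) = 0 := norm_le_zero_iff.mp this
    have : (a - b : A.domain) = 0 := Subtype.ext this
    exact sub_eq_zero.mp this
  set eqv := LinearEquiv.ofInjective g hginj with heqv
  set T₀ : (LinearMap.range g) →ₗ[ℂ] H := (A.domain.subtype).comp eqv.symm.toLinearMap with hT₀def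
  have hT₀ : ∀ x : A.domain, T₀ ⟨g x, LinearMap.mem_range_self g x⟩ = (x : H) := by
    intro x
    have h1 : eqv x = ⟨g x, LinearMap.mem_range_self g x⟩ :=
      Subtype.ext (by simp [heqv, LinearEquiv.ofInjective_apply])
    rw [hT₀def]
    simp [← h1]
  have hbound : ∀ u : LinearMap.range g, ‖T₀ u‖ ≤ 1 * ‖u‖ := by
    intro u
    obtain ⟨x, hx⟩ := u.2
    have hu : u = ⟨g x, LinearMap.mem_range_self g x⟩ := Subtype.ext hx.symm
    rw [hu, hT₀ x, one_mul]
    exact hnorm x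
  set T₁ : (LinearMap.range g) →L[ℂ] H := LinearMap.mkContinuous T₀ 1 hbound with hT₁def
  set e : (LinearMap.range g) →L[ℂ] H := (LinearMap.range g).subtypeL with hedef
  have hsets : Set.range (fun x : A.domain => (x : H) + A x)
      = ((LinearMap.range g : Submodule ℂ H) : Set H) := by
    rw [LinearMap.coe_range]; rfl
  have hde : DenseRange e := by
    have h1 : Set.range e = ((LinearMap.range g : Submodule ℂ H) : Set H) := Subtype.range_coe
    unfold DenseRange
    rw [h1, ← hsets]
    exact hdense
  have hui : IsUniformInducing e := isometry_subtype_coe.isUniformInducing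
  refine ⟨T₁.extend e, ?_, ?_⟩
  · intro x
    have h1 : ((x : H) + A x) = e ⟨g x, LinearMap.mem_range_self g x⟩ := rfl
    rw [h1, ContinuousLinearMap.extend_eq _ hde hui]
    exact hT₀ x
  · set T := T₁.extend e with hTdef
    have hclosed : IsClosed {w : H | ‖T w‖ ^ 2 ≤ (⟪w, T w⟫_ℂ).re} := by
      apply isClosed_le
      · exact (T.continuous.norm).pow 2
      · exact Complex.continuous_re.comp (continuous_id.inner T.continuous)
    have hsub : Set.range (fun x : A.domain => (x : H) + A x) ⊆
        {w : H | ‖T w‖ ^ 2 ≤ (⟪w, T w⟫_ℂ).re} := by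
      rintro w ⟨x, rfl⟩
      have hTw : T ((x : H) + A x) = (x : H) := by
        have h1 : ((x : H) + A x) = e ⟨g x, LinearMap.mem_range_self g x⟩ := rfl
        rw [h1, ContinuousLinearMap.extend_eq _ hde hui]
        exact hT₀ x
      simp only [Set.mem_setOf_eq, hTw]
      have hx : (⟪(x : H), (x : H)⟫_ℂ).re = ‖(x : H)‖ ^ 2 := by
        have : ∀ z : ℂ, z.re = RCLike.re z := fun _ => rfl
        rw [this]; exact inner_self_eq_norm_sq _
      rw [inner_add_left, Complex.add_re, hx]
      have := hacc x
      linarith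
    intro w
    have hw : w ∈ closure (Set.range (fun x : A.domain => (x : H) + A x)) := by
      rw [hdense.closure_eq]; trivial
    exact hclosed.closure_subset_iff.mpr hsub hw

/-- An operator range with a closed algebraic complement is closed. -/
private lemma aux_closed (R₀ : H →L[ℂ] H) (N : Submodule ℂ H) (hNc : IsClosed (N : Set H))
    (hdisj : ∀ y : H, y ∈ LinearMap.range (R₀ : H →ₗ[ℂ] H) → y ∈ N → y = 0)
    (hsup : ∀ y : H, ∃ r ∈ LinearMap.range (R₀ : H →ₗ[ℂ] H), ∃ n ∈ N, y = r + n) :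
    IsClosed ((LinearMap.range (R₀ : H →ₗ[ℂ] H) : Submodule ℂ H) : Set H) := by
  haveI : CompleteSpace N := hNc.completeSpace_coe
  set K : Submodule ℂ H := (LinearMap.ker (R₀ : H →ₗ[ℂ] H))ᗮ with hKdef
  haveI : CompleteSpace K := (Submodule.isClosed_orthogonal _).completeSpace_coe
  haveI : CompleteSpace (LinearMap.ker (R₀ : H →ₗ[ℂ] H)) :=
    (ContinuousLinearMap.isClosed_ker R₀).completeSpace_coe
  set Φ : (K × N) →L[ℂ] H := (R₀.comp K.subtypeL).coprod N.subtypeL with hΦdef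
  have hΦapp : ∀ p : K × N, Φ p = R₀ (p.1 : H) + (p.2 : H) := fun p => rfl
  have hker : LinearMap.ker (Φ : K × N →ₗ[ℂ] H) = ⊥ := by
    rw [LinearMap.ker_eq_bot']
    rintro ⟨a, n⟩ h
    have h' : R₀ (a : H) + (n : H) = 0 := h
    have hRa : R₀ (a : H) = -(n : H) := eq_neg_of_add_eq_zero_left h'
    have hR0 : R₀ (a : H) = 0 := by
      apply hdisj
      · exact LinearMap.mem_range_self _ _
      · rw [hRa]; exact neg_mem n.2
    have hn0 : (n : H) = 0 := by rw [hR0] at hRa; simpa using hRa.symm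
    have ha0 : (a : H) = 0 := by
      have hker' : (a : H) ∈ LinearMap.ker (R₀ : H →ₗ[ℂ] H) := LinearMap.mem_ker.mpr hR0
      exact Submodule.disjoint_def.mp (Submodule.orthogonal_disjoint _) _ hker' a.2
    exact Prod.ext (Subtype.ext ha0) (Subtype.ext hn0)
  have hrange : LinearMap.range (Φ : K × N →ₗ[ℂ] H) = ⊤ := by
    rw [LinearMap.range_eq_top]
    intro y
    obtain ⟨r, hr, n, hn, rfl⟩ := hsup y
    obtain ⟨b, rfl⟩ := hr
    obtain ⟨p, hp, q, hq, hb⟩ := Submodule.exists_add_mem_mem_orthogonal (K := LinearMap.ker (R₀ : H →ₗ[ℂ] H)) b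
    refine ⟨(⟨q, hq⟩, ⟨n, hn⟩), ?_⟩
    rw [ContinuousLinearMap.coe_coe, hΦapp]
    simp only [ContinuousLinearMap.coe_coe]
    rw [hb, map_add, (by simpa using LinearMap.mem_ker.mp hp : R₀ p = 0), zero_add]
  set e := ContinuousLinearEquiv.ofBijective Φ hker hrange with hedef
  have hecoe : ∀ p : K × N, e p = Φ p := fun p => rfl
  have key : ∀ y : H, y ∈ LinearMap.range (R₀ : H →ₗ[ℂ] H) ↔ (e.symm y).2 = 0 := by
    intro y
    constructor
    · rintro ⟨b, rfl⟩
      obtain ⟨p, hp, q, hq, hb⟩ := Submodule.exists_add_mem_mem_orthogonal (K := LinearMap.ker (R₀ : H →ₗ[ℂ] H)) b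
      have h1 : e.symm (R₀ b) = (⟨q, hq⟩, 0) := by
        rw [ContinuousLinearEquiv.symm_apply_eq, hecoe, hΦapp]
        simp only [Submodule.coe_zero, add_zero]
        rw [hb, map_add, (by simpa using LinearMap.mem_ker.mp hp : R₀ p = 0), zero_add]
      rw [ContinuousLinearMap.coe_coe, h1]
    · intro h
      refine ⟨((e.symm y).1 : H), ?_⟩
      have h1 : e (e.symm y) = y := e.apply_symm_apply y
      rw [hecoe, hΦapp, h] at h1
      simpa using h1
  have hset : ((LinearMap.range (R₀ : H →ₗ[ℂ] H) : Submodule ℂ H) : Set H)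
      = (fun y : H => (e.symm y).2) ⁻¹' {(0 : N)} := by
    ext y
    simpa using key y
  rw [hset]
  exact isClosed_singleton.preimage (continuous_snd.comp e.symm.continuous)

end AuxAccretive

/-- If `A` is a maximal accretive operator in a complex Hilbert space
`H` such that `rg(I+A)` is an operator range in `H` (the range of some bounded operator
on `H`), then `A` is m-accretive, i.e. `rg(I+A) = H`. -/
theorem maximal_accretive_operator_range_m_accretive
    {H : Type*} [NormedAddCommGroup H] [InnerProductSpace ℂ H] [CompleteSpace H]
    (A : H →ₗ.[ℂ] H)
    (hacc : ∀ x : A.domain, 0 ≤ (⟪A x, (x : H)⟫_ℂ).re)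
    (hmax : ∀ B : H →ₗ.[ℂ] H, (∀ x : B.domain, 0 ≤ (⟪B x, (x : H)⟫_ℂ).re) →
      A ≤ B → A = B)
    (R₀ : H →L[ℂ] H)
    (hR₀ : Set.range (fun x : A.domain => (x : H) + A x) = Set.range R₀) :
    Set.range (fun x : A.domain => (x : H) + A x) = Set.univ := by
  have hre : ∀ z : ℂ, z.re = RCLike.re z := fun _ => rfl
  set S := Set.range (fun x : A.domain => (x : H) + A x) with hSdef
  set g : A.domain →ₗ[ℂ] H := A.domain.subtype + A.toFun with hgdef
  set Rsub := LinearMap.range g with hRdef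
  have hsets : S = (Rsub : Set H) := by
    rw [hRdef, LinearMap.coe_range]; rfl
  -- Step 1 : density of the range of I + A
  have horth : Rsubᗮ = ⊥ := by
    by_contra hne
    obtain ⟨y, hyR, hy0⟩ := (Submodule.ne_bot_iff _).mp hne
    have hyorth : ∀ u ∈ Rsub, ⟪u, y⟫_ℂ = 0 := (Submodule.mem_orthogonal Rsub y).mp hyR
    have hxy : ∀ x : A.domain, ⟪A x, y⟫_ℂ = -⟪(x : H), y⟫_ℂ := by
      intro x
      have h0 := hyorth ((x : H) + A x) ⟨x, rfl⟩
      rw [inner_add_left] at h0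
      linear_combination h0
    have hyA : y ∉ A.domain := by
      intro hyd
      have h0 := hxy ⟨y, hyd⟩
      have h1 := hacc ⟨y, hyd⟩
      rw [h0] at h1
      have h2 : (⟪y, y⟫_ℂ).re = ‖y‖ ^ 2 := by
        rw [hre]; exact inner_self_eq_norm_sq _
      rw [Complex.neg_re, h2] at h1
      have h3 : ‖y‖ = 0 := by nlinarith [norm_nonneg y]
      exact hy0 (norm_eq_zero.mp h3)
    refine aux_ext A hmax y y hyA ?_
    intro x c
    have hexp : ⟪A x + c • y, (x : H) + c • y⟫_ℂ =
        ⟪A x, (x : H)⟫_ℂ +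
          ((starRingEnd ℂ) (c * ⟪(x : H), y⟫_ℂ) - c * ⟪(x : H), y⟫_ℂ) +
          (starRingEnd ℂ) c * c * ⟪y, y⟫_ℂ := by
      rw [inner_add_left, inner_add_right, inner_add_right, inner_smul_left, inner_smul_right,
        inner_smul_left, inner_smul_right, hxy x, map_mul,
        ← inner_conj_symm ((x : H)) y, Complex.conj_conj]
      ring
    have hyy : ⟪y, y⟫_ℂ = ((‖y‖ ^ 2 : ℝ) : ℂ) := by
      rw [inner_self_eq_norm_sq_to_K, Complex.ofReal_pow]
      norm_cast
    rw [hexp, hyy]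
    have hlast : ((starRingEnd ℂ) c * c * ((‖y‖ ^ 2 : ℝ) : ℂ)).re
        = Complex.normSq c * ‖y‖ ^ 2 := by
      rw [← Complex.normSq_eq_conj_mul_self, ← Complex.ofReal_mul, Complex.ofReal_re]
    rw [Complex.add_re, Complex.add_re, hlast, Complex.sub_re, Complex.conj_re]
    have := hacc x
    have := Complex.normSq_nonneg c
    have := sq_nonneg ‖y‖
    nlinarith
  have hdense : Dense S := by
    rw [hsets, dense_iff_closure_eq, ← Submodule.topologicalClosure_coe,
      Submodule.topologicalClosure_eq_top_iff.mpr horth]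
    rfl
  -- Step 2 : the contraction T
  obtain ⟨T, hTg, hTre⟩ := aux_T A hacc hdense
  -- Step 3 : T maps everything into the domain of A
  have hTdom : ∀ y : H, T y ∈ A.domain := by
    intro y
    by_contra hyd
    refine aux_ext A hmax (T y) (y - T y) hyd ?_
    intro x c
    have hkey : (x : H) + c • T y = T (((x : H) + A x) + c • y) := by
      rw [map_add, map_smul, hTg x]
    have hval : A x + c • (y - T y)
        = (((x : H) + A x) + c • y) - T (((x : H) + A x) + c • y) := by
      rw [← hkey, smul_sub]
      abel
    rw [hval, hkey, inner_sub_left, Complex.sub_re]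
    have h2 : (⟪T (((x : H) + A x) + c • y), T (((x : H) + A x) + c • y)⟫_ℂ).re
        = ‖T (((x : H) + A x) + c • y)‖ ^ 2 := by
      rw [hre]; exact inner_self_eq_norm_sq _
    have := hTre (((x : H) + A x) + c • y)
    rw [h2]
    linarith
  -- Step 4 : H = S ∔ ker T and conclusion
  set N := LinearMap.ker (T : H →ₗ[ℂ] H) with hNdef
  have hNc : IsClosed (N : Set H) := ContinuousLinearMap.isClosed_ker T
  have hrange_set : ((LinearMap.range (R₀ : H →ₗ[ℂ] H) : Submodule ℂ H) : Set H) = S := by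
    rw [LinearMap.coe_range, ContinuousLinearMap.coe_coe, ← hR₀]
  have hdisj : ∀ y : H, y ∈ LinearMap.range (R₀ : H →ₗ[ℂ] H) → y ∈ N → y = 0 := by
    intro y hy hyN
    have hyS : y ∈ S := by rw [← hrange_set]; exact hy
    obtain ⟨x, rfl⟩ := hyS
    have h1 : T ((x : H) + A x) = x := hTg x
    have h2 : T ((x : H) + A x) = 0 := hyN
    have hx0 : (x : H) = 0 := by rw [h1] at h2; exact h2
    have hxx : x = 0 := Subtype.ext hx0
    rw [hxx]
    simp
  have hsup : ∀ y : H, ∃ r ∈ LinearMap.range (R₀ : H →ₗ[ℂ] H), ∃ n ∈ N, y = r + n := by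
    intro y
    set x : A.domain := ⟨T y, hTdom y⟩ with hx
    refine ⟨(x : H) + A x, ?_, y - ((x : H) + A x), ?_, by abel⟩
    · rw [← SetLike.mem_coe, hrange_set]
      exact ⟨x, rfl⟩
    · have h1 : T ((x : H) + A x) = x := hTg x
      have : T (y - ((x : H) + A x)) = 0 := by
        rw [map_sub, h1, hx]
        simp
      exact LinearMap.mem_ker.mpr this
  have hclosed : IsClosed S := hrange_set ▸ aux_closed R₀ N hNc hdisj hsup
  rw [← hclosed.closure_eq, hdense.closure_eq]
end

section
/- Let a be a continuous accretive form, j ∈ L(V,H) with dense range, and let the dual form be a*(u,v) = conj(a(v,u)). Then V_j(a) ∩ ker j = V_j(a*) ∩ ker j and D_j(a) ∩ ker j = D_j(a*) ∩ ker j. Consequently, (a,j) is associated with an accretive operator if and only if (a*,j) is. -/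
open scoped InnerProductSpace

variable {V H : Type*} [NormedAddCommGroup V] [InnerProductSpace ℂ V] [CompleteSpace V]
  [NormedAddCommGroup H] [InnerProductSpace ℂ H] [CompleteSpace H]

/-- The space `V_j(a) = {u ∈ V : a(u,v) = 0 for all v ∈ ker j}`. -/
def Vj (a : V → V → ℂ) (j : V →L[ℂ] H) : Set V :=
  {u : V | ∀ v : V, j v = 0 → a u v = 0}

/-- The dual form `a*(u,v) = conj (a(v,u))`. -/
def dualForm (a : V → V → ℂ) : V → V → ℂ :=
  fun u v => starRingEnd ℂ (a v u)

set_option linter.unusedSectionVars false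

/-- A nonnegative symmetric operator with vanishing diagonal entry at `u` kills `u`. -/
lemma pos_inner_zero (S : V →L[ℂ] V)
    (hsym : ∀ u v : V, ⟪S u, v⟫_ℂ = ⟪u, S v⟫_ℂ)
    (hpos : ∀ u : V, 0 ≤ (⟪u, S u⟫_ℂ).re)
    {u : V} (h : (⟪u, S u⟫_ℂ).re = 0) : S u = 0 := by
  set c := (⟪S u, S (S u)⟫_ℂ).re with hc_def
  have hc : 0 ≤ c := hpos (S u)
  set N := ‖S u‖ ^ 2 with hN_def
  have hN : 0 ≤ N := by positivity
  have key : ∀ t : ℝ, 0 ≤ 2 * t * N + t ^ 2 * c := by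
    intro t
    have h0 := hpos (u + (t : ℂ) • S u)
    have expand : (⟪u + (t:ℂ) • S u, S (u + (t:ℂ) • S u)⟫_ℂ).re
        = (⟪u, S u⟫_ℂ).re + 2 * t * N + t ^ 2 * c := by
      have h1 : ⟪u, S ((t:ℂ) • S u)⟫_ℂ = (t:ℂ) * ⟪S u, S u⟫_ℂ := by
        rw [map_smul, inner_smul_right, ← hsym]
      have h2 : ⟪(t:ℂ) • S u, S u⟫_ℂ = (t:ℂ) * ⟪S u, S u⟫_ℂ := by
        rw [inner_smul_left, Complex.conj_ofReal]
      have h3 : ⟪(t:ℂ) • S u, S ((t:ℂ) • S u)⟫_ℂ = (t:ℂ) * (t:ℂ) * ⟪S u, S (S u)⟫_ℂ := by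
        rw [map_smul, inner_smul_right, inner_smul_left, Complex.conj_ofReal]; ring
      rw [map_add, inner_add_left, inner_add_right, inner_add_right, h1, h2, h3]
      have h4 : ⟪S u, S u⟫_ℂ = (N : ℂ) := by
        rw [hN_def]; exact_mod_cast inner_self_eq_norm_sq_to_K (S u)
      rw [h4]
      simp [Complex.add_re, Complex.mul_re, Complex.ofReal_re, Complex.ofReal_im]
      ring
    rw [expand, h] at h0
    linarith
  have hc1 : (0:ℝ) < c + 1 := by linarith
  have h2 : ∀ t : ℝ, 0 < t → 2 * N ≤ t * c := by
    intro t ht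
    have hk := key (-t)
    nlinarith [mul_pos ht ht]
  have hN0 : N = 0 := by
    by_contra hne
    have hNpos : 0 < N := lt_of_le_of_ne hN (Ne.symm hne)
    have h3 := h2 (N / (c + 1)) (div_pos hNpos hc1)
    have h4 : N / (c + 1) * c < 2 * N := by
      rw [div_mul_eq_mul_div, div_lt_iff₀ hc1]
      nlinarith
    linarith
  have : ‖S u‖ = 0 := by
    have := hN0; rw [hN_def] at this; nlinarith [norm_nonneg (S u)]
  simpa using this

/-- If `a(u,u) = 0` for an accretive form, then `a(u,·) + a*(u,·) = 0`. -/
lemma ker_lemma (a : V → V → ℂ) (hacc : ∀ u : V, 0 ≤ (a u u).re)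
    (T₀ : V →L[ℂ] V) (hT₀ : ∀ u v : V, a u v = ⟪v, T₀ u⟫_ℂ)
    {u : V} (hu : a u u = 0) :
    ∀ v : V, a u v + starRingEnd ℂ (a v u) = 0 := by
  set S : V →L[ℂ] V := T₀ + ContinuousLinearMap.adjoint T₀ with hS
  have hSapp : ∀ w : V, S w = T₀ w + ContinuousLinearMap.adjoint T₀ w := fun w => rfl
  have hinner : ∀ w v : V, ⟪v, S w⟫_ℂ = a w v + starRingEnd ℂ (a v w) := by
    intro w v
    rw [hSapp, inner_add_right, ContinuousLinearMap.adjoint_inner_right, ← hT₀,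
      hT₀ v w, inner_conj_symm]
  have hsym : ∀ w v : V, ⟪S w, v⟫_ℂ = ⟪w, S v⟫_ℂ := by
    intro w v
    rw [← inner_conj_symm, hinner, hinner]
    simp [map_add, mul_comm]
    ring
  have hpos : ∀ w : V, 0 ≤ (⟪w, S w⟫_ℂ).re := by
    intro w
    rw [hinner]
    simp only [Complex.add_re, Complex.conj_re]
    linarith [hacc w]
  have h0 : (⟪u, S u⟫_ℂ).re = 0 := by
    rw [hinner, hu]; simp
  have hS0 : S u = 0 := pos_inner_zero S hsym hpos h0
  intro v
  rw [← hinner, hS0, inner_zero_right]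

/-- Density gives uniqueness of representing vectors. -/
lemma dense_inner_zero (j : V →L[ℂ] H) (hj : DenseRange j) {f : H}
    (h : ∀ v : V, ⟪j v, f⟫_ℂ = 0) : f = 0 := by
  have hcl : IsClosed {x : H | ⟪x, f⟫_ℂ = 0} :=
    isClosed_eq (continuous_id.inner continuous_const) continuous_const
  have hsub : Set.range j ⊆ {x : H | ⟪x, f⟫_ℂ = 0} := by
    rintro x ⟨v, rfl⟩; exact h v
  have : ∀ x : H, ⟪x, f⟫_ℂ = 0 := by
    intro x
    have hx : x ∈ closure (Set.range j) := hj x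
    exact closure_minimal hsub hcl hx
  have := this f
  rwa [inner_self_eq_zero] at this

lemma dualForm_rep (a : V → V → ℂ) (T₀ : V →L[ℂ] V)
    (hT₀ : ∀ u v : V, a u v = ⟪v, T₀ u⟫_ℂ) (u v : V) :
    dualForm a u v = ⟪v, ContinuousLinearMap.adjoint T₀ u⟫_ℂ := by
  rw [dualForm, hT₀ v u, inner_conj_symm, ContinuousLinearMap.adjoint_inner_right]

lemma dualForm_dualForm (a : V → V → ℂ) : dualForm (dualForm a) = a := by
  funext u v; simp [dualForm]

lemma dualForm_acc (a : V → V → ℂ) (hacc : ∀ u : V, 0 ≤ (a u u).re) :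
    ∀ u : V, 0 ≤ (dualForm a u u).re := by
  intro u; rw [dualForm]; simpa using hacc u

/-- One inclusion for `Vj`. -/
lemma Vj_inter_subset (j : V →L[ℂ] H) (a : V → V → ℂ)
    (hacc : ∀ u : V, 0 ≤ (a u u).re)
    (T₀ : V →L[ℂ] V) (hT₀ : ∀ u v : V, a u v = ⟪v, T₀ u⟫_ℂ) :
    Vj a j ∩ {u : V | j u = 0} ⊆ Vj (dualForm a) j ∩ {u : V | j u = 0} := by
  rintro u ⟨hV, hk⟩
  refine ⟨?_, hk⟩
  intro v hv
  have h0 : a u u = 0 := hV u hk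
  have := ker_lemma a hacc T₀ hT₀ h0 v
  have h1 : a u v = 0 := hV v hv
  rw [h1, zero_add] at this
  rw [dualForm]
  exact this

/-- One inclusion for `Dj`. -/
lemma Dj_inter_subset (j : V →L[ℂ] H) (a : V → V → ℂ)
    (hacc : ∀ u : V, 0 ≤ (a u u).re)
    (T₀ : V →L[ℂ] V) (hT₀ : ∀ u v : V, a u v = ⟪v, T₀ u⟫_ℂ) :
    Dj a j ∩ {u : V | j u = 0} ⊆ Dj (dualForm a) j ∩ {u : V | j u = 0} := by
  rintro u ⟨⟨f, hf⟩, hk⟩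
  have h0 : a u u = 0 := by rw [hf u, hk, inner_zero_left]
  have hker := ker_lemma a hacc T₀ hT₀ h0
  refine ⟨⟨-f, fun v => ?_⟩, hk⟩
  have := hker v
  rw [dualForm]
  have : starRingEnd ℂ (a v u) = -(a u v) := by linear_combination this
  rw [this, hf v, inner_neg_right]

/-- Existence of the associated operator transfers to the dual form. -/
lemma exists_assoc_dual (j : V →L[ℂ] H) (hj : DenseRange j) (a : V → V → ℂ)
    (hacc : ∀ u : V, 0 ≤ (a u u).re)
    (T₀ : V →L[ℂ] V) (hT₀ : ∀ u v : V, a u v = ⟪v, T₀ u⟫_ℂ)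
    (hex : ∃ A : H →ₗ.[ℂ] H, IsAssociatedOperator a j A) :
    ∃ A : H →ₗ.[ℂ] H, IsAssociatedOperator (dualForm a) j A := by
  obtain ⟨A, hA⟩ := hex
  have hrep := dualForm_rep a T₀ hT₀
  set g : Submodule ℂ (H × H) :=
    { carrier := {p : H × H | ∃ u : V, j u = p.1 ∧ ∀ v : V, dualForm a u v = ⟪j v, p.2⟫_ℂ}
      add_mem' := by
        rintro p q ⟨u₁, hu₁, hf₁⟩ ⟨u₂, hu₂, hf₂⟩
        refine ⟨u₁ + u₂, by simp [hu₁, hu₂], fun v => ?_⟩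
        rw [hrep, map_add, inner_add_right, ← hrep, ← hrep, hf₁ v, hf₂ v, ← inner_add_right]
        rfl
      zero_mem' := ⟨0, by simp, fun v => by rw [hrep]; simp⟩
      smul_mem' := by
        rintro c p ⟨u, hu, hf⟩
        refine ⟨c • u, by simp [hu], fun v => ?_⟩
        rw [hrep, map_smul, inner_smul_right, ← hrep, hf v, ← inner_smul_right]
        rfl } with hg_def
  have hg : ∀ x ∈ g, x.1 = 0 → x.2 = 0 := by
    rintro ⟨x1, f⟩ ⟨u, hu1, hu2⟩ hx1
    simp only at hu1 hu2 hx1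
    subst hx1
    have hju : j u = 0 := hu1
    have h00 : dualForm a u u = 0 := by rw [hu2 u, hju, inner_zero_left]
    have hauu : a u u = 0 := by
      have : starRingEnd ℂ (a u u) = 0 := h00
      simpa using congrArg (starRingEnd ℂ) this
    have hker := ker_lemma a hacc T₀ hT₀ hauu
    have haDj : ∀ v : V, a u v = ⟪j v, -f⟫_ℂ := by
      intro v
      have h1 := hker v
      have h2 : starRingEnd ℂ (a v u) = ⟪j v, f⟫_ℂ := (hu2 v).symm ▸ rfl
      rw [inner_neg_right, ← h2]
      linear_combination h1
    have huD : u ∈ Dj a j := ⟨-f, haDj⟩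
    have hmem : j u ∈ A.domain := by
      have : j u ∈ (A.domain : Set H) := by
        rw [hA.1]; exact ⟨u, huD, rfl⟩
      exact this
    have hAzero : A ⟨j u, hmem⟩ = 0 := by
      have hsub : (⟨j u, hmem⟩ : A.domain) = 0 := Subtype.ext (by simpa using hju)
      rw [hsub, A.map_zero]
    have hzero : ∀ v : V, ⟪j v, -f⟫_ℂ = 0 := by
      intro v
      rw [← haDj v, hA.2 u huD hmem v, hAzero, inner_zero_right]
    have : (-f : H) = 0 := dense_inner_zero j hj hzero
    simpa using this
  refine ⟨g.toLinearPMap, ?_, ?_⟩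
  · ext x
    constructor
    · intro hx
      rw [Submodule.toLinearPMap_domain] at hx
      obtain ⟨⟨x1, f⟩, hmem, hfst⟩ := hx
      obtain ⟨u, hu1, hu2⟩ := hmem
      exact ⟨u, ⟨f, hu2⟩, hu1.trans hfst⟩
    · rintro ⟨u, ⟨f, hf⟩, rfl⟩
      rw [Submodule.toLinearPMap_domain]
      exact ⟨(j u, f), ⟨u, rfl, hf⟩, rfl⟩
  · intro u huD hju v
    obtain ⟨f, hf⟩ := huD
    have hmemg : (j u, f) ∈ g := ⟨u, rfl, hf⟩
    have hgraph : (j u, f) ∈ g.toLinearPMap.graph := by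
      rw [Submodule.toLinearPMap_graph_eq g hg]; exact hmemg
    rw [LinearPMap.mem_graph_iff] at hgraph
    obtain ⟨y, hy1, hy2⟩ := hgraph
    have : (⟨j u, hju⟩ : g.toLinearPMap.domain) = y := Subtype.ext hy1.symm
    rw [hf v, this, hy2]

/-- Any operator associated with an accretive form is automatically accretive. -/
lemma assoc_accretive (j : V →L[ℂ] H) (a : V → V → ℂ)
    (hacc : ∀ u : V, 0 ≤ (a u u).re) (A : H →ₗ.[ℂ] H)
    (hA : IsAssociatedOperator a j A) :
    ∀ x : A.domain, 0 ≤ (⟪A x, (x : H)⟫_ℂ).re := by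
  intro x
  have hx : (x : H) ∈ (A.domain : Set H) := x.2
  rw [hA.1] at hx
  obtain ⟨u, huD, hju⟩ := hx
  have hmem : j u ∈ A.domain := hju ▸ x.2
  have heq := hA.2 u huD hmem u
  have hxeq : (⟨j u, hmem⟩ : A.domain) = x := Subtype.ext hju
  rw [hxeq] at heq
  have h5 : ⟪(A x : H), (x : H)⟫_ℂ = starRingEnd ℂ (a u u) := by
    rw [heq, hju, inner_conj_symm]
  rw [h5, Complex.conj_re]
  exact hacc u

/-- For the dual form `a*`:
`V_j(a) ∩ ker j = V_j(a*) ∩ ker j`, `D_j(a) ∩ ker j = D_j(a*) ∩ ker j`, and `(a,j)` is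
associated with an accretive operator iff `(a*,j)` is. -/
theorem dual_form_kernel_intersections
    (j : V →L[ℂ] H) (hj : DenseRange j)
    (a : V → V → ℂ)
    (hcont : ∃ M : ℝ, ∀ u v : V, ‖a u v‖ ≤ M * ‖u‖ * ‖v‖)
    (hacc : ∀ u : V, 0 ≤ (a u u).re)
    (T₀ : V →L[ℂ] V) (hT₀ : ∀ u v : V, a u v = ⟪v, T₀ u⟫_ℂ) :
    Vj a j ∩ {u : V | j u = 0} = Vj (dualForm a) j ∩ {u : V | j u = 0} ∧
    Dj a j ∩ {u : V | j u = 0} = Dj (dualForm a) j ∩ {u : V | j u = 0} ∧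
    ((∃ A : H →ₗ.[ℂ] H, (∀ x : A.domain, 0 ≤ (⟪A x, (x : H)⟫_ℂ).re) ∧
        IsAssociatedOperator a j A) ↔
      (∃ A : H →ₗ.[ℂ] H, (∀ x : A.domain, 0 ≤ (⟪A x, (x : H)⟫_ℂ).re) ∧
        IsAssociatedOperator (dualForm a) j A)) := by
  have hacc' := dualForm_acc a hacc
  have hT₀' : ∀ u v : V, dualForm a u v = ⟪v, ContinuousLinearMap.adjoint T₀ u⟫_ℂ :=
    dualForm_rep a T₀ hT₀
  refine ⟨?_, ?_, ?_⟩
  · refine Set.Subset.antisymm (Vj_inter_subset j a hacc T₀ hT₀) ?_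
    have h := Vj_inter_subset j (dualForm a) hacc' (ContinuousLinearMap.adjoint T₀) hT₀'
    rwa [dualForm_dualForm] at h
  · refine Set.Subset.antisymm (Dj_inter_subset j a hacc T₀ hT₀) ?_
    have h := Dj_inter_subset j (dualForm a) hacc' (ContinuousLinearMap.adjoint T₀) hT₀'
    rwa [dualForm_dualForm] at h
  · constructor
    · rintro ⟨A, -, hA⟩
      obtain ⟨A', hA'⟩ := exists_assoc_dual j hj a hacc T₀ hT₀ ⟨A, hA⟩
      exact ⟨A', assoc_accretive j (dualForm a) hacc' A' hA', hA'⟩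
    · rintro ⟨A, -, hA⟩
      obtain ⟨A', hA'⟩ := exists_assoc_dual j hj (dualForm a) hacc'
        (ContinuousLinearMap.adjoint T₀) hT₀' ⟨A, hA⟩
      rw [dualForm_dualForm] at hA'
      exact ⟨A', assoc_accretive j a hacc A' hA', hA'⟩
end
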